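/- Let $M$ be a $\mathbb{C}$-module with a symmetric $2n$-multilinear form $\mu : M^{2n} \to \mathbb{C}$ (intersection form), writing $D^{2n} := \mu(D, \dots, D)$. Let $q : M \to \mathbb{C}$ be a quadratic form with polar bilinear form $B$, and $a_0 \in \mathbb{C}$, $a_0 \neq 0$, such that $D^{2n} = a_0 \, q(D)^n$ for all $D \in M$. If $w, A, H \in M$ satisfy $B(w,A) = B(w,H) = 0$ and $q(H) = 0$, then the mixed intersection number $\mu(w, w, A, \dots, A, H, \dots, H)$ with $w$ twice, $A$ exactly $n-2$ times, and $H$ exactly $n$ times, equals zero. -/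
import Mathlib
open Polynomial Finset

private def vv {M : Type*} (w A H : M) : Fin 3 → M := ![w, A, H]
private def ee (n : ℕ) : Fin 3 → ℕ := ![0, 1, 2*n+1]
private def rr (n : ℕ) : Fin (2*n) → Fin 3 :=
  fun p => if (p:ℕ) < 2 then 0 else if (p:ℕ) < 2 + (n-2) then 1 else 2

private lemma card_filter_fin' (m : ℕ) (p : ℕ → Prop) [DecidablePred p] :
    (univ.filter fun i : Fin m => p i).card = ((range m).filter p).card := by
  rw [Finset.card_filter, Finset.card_filter]
  exact Fin.sum_univ_eq_sum_range (fun i => if p i then 1 else 0) m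

private lemma sum_ee (n : ℕ) (r : Fin (2*n) → Fin 3) :
    ∑ i, ee n (r i) = (univ.filter fun i => r i = 1).card
      + (2*n+1) * (univ.filter fun i => r i = 2).card := by
  rw [← Finset.sum_fiberwise univ r (fun i => ee n (r i))]
  have : ∀ b : Fin 3, ∑ i ∈ univ.filter (fun i => r i = b), ee n (r i)
      = (univ.filter fun i => r i = b).card * ee n b := by
    intro b
    rw [Finset.sum_congr rfl fun i hi => by rw [(Finset.mem_filter.mp hi).2],
      Finset.sum_const, smul_eq_mul]
  rw [Fin.sum_univ_three, this 0, this 1, this 2]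
  simp [ee]
  ring

private lemma total_count (n : ℕ) (r : Fin (2*n) → Fin 3) :
    (univ.filter fun i => r i = 0).card + (univ.filter fun i => r i = 1).card
      + (univ.filter fun i => r i = 2).card = 2*n := by
  have := Finset.card_eq_sum_card_fiberwise
    (fun x (_ : x ∈ (univ : Finset (Fin (2*n)))) => Finset.mem_univ (r x))
  simp only [Finset.card_univ, Fintype.card_fin, Fin.sum_univ_three] at this
  omega

private lemma rr_count0 (n : ℕ) (hn : 2 ≤ n) :
    (univ.filter fun i => rr n i = 0).card = 2 := by
  have h : ∀ i : Fin (2*n), rr n i = 0 ↔ (i:ℕ) < 2 := by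
    intro i
    by_cases h1 : (i:ℕ) < 2 <;> by_cases h2 : (i:ℕ) < 2 + (n-2) <;>
      simp [rr, h1, h2] <;> first | omega | decide
  rw [Finset.filter_congr fun i _ => h i, card_filter_fin' (2*n) (fun j => j < 2)]
  have : (range (2*n)).filter (fun j => j < 2) = range 2 := by
    ext x; simp only [mem_filter, mem_range]; omega
  rw [this, Finset.card_range]

private lemma rr_count1 (n : ℕ) (hn : 2 ≤ n) :
    (univ.filter fun i => rr n i = 1).card = n - 2 := by
  have h : ∀ i : Fin (2*n), rr n i = 1 ↔ (2 ≤ (i:ℕ) ∧ (i:ℕ) < n) := by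
    intro i
    by_cases h1 : (i:ℕ) < 2 <;> by_cases h2 : (i:ℕ) < 2 + (n-2) <;>
      simp [rr, h1, h2] <;> first | omega | decide
  rw [Finset.filter_congr fun i _ => h i,
    card_filter_fin' (2*n) (fun j => 2 ≤ j ∧ j < n)]
  have : (range (2*n)).filter (fun j => 2 ≤ j ∧ j < n) = Finset.Ico 2 n := by
    ext x; simp only [mem_filter, mem_range, Finset.mem_Ico]; omega
  rw [this, Nat.card_Ico]

private lemma rr_count2 (n : ℕ) (hn : 2 ≤ n) :
    (univ.filter fun i => rr n i = 2).card = n := by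
  have h : ∀ i : Fin (2*n), rr n i = 2 ↔ (n ≤ (i:ℕ)) := by
    intro i
    have := i.isLt
    by_cases h1 : (i:ℕ) < 2 <;> by_cases h2 : (i:ℕ) < 2 + (n-2) <;>
      simp [rr, h1, h2] <;> first | omega | decide
  rw [Finset.filter_congr fun i _ => h i, card_filter_fin' (2*n) (fun j => n ≤ j)]
  have : (range (2*n)).filter (fun j => n ≤ j) = Finset.Ico n (2*n) := by
    ext x; simp only [mem_filter, mem_range, Finset.mem_Ico]; omega
  rw [this, Nat.card_Ico]
  omega

private lemma exists_comp_perm {α β : Type*} [Fintype α] [DecidableEq α] [DecidableEq β]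
    (f g : α → β)
    (h : ∀ b, Fintype.card {a // f a = b} = Fintype.card {a // g a = b}) :
    ∃ σ : Equiv.Perm α, g ∘ σ = f := by
  refine ⟨(Equiv.sigmaFiberEquiv f).symm.trans
    ((Equiv.sigmaCongrRight fun b => Fintype.equivOfCardEq (h b)).trans
      (Equiv.sigmaFiberEquiv g)), ?_⟩
  funext a
  have h1 : (Equiv.sigmaFiberEquiv f).symm a = ⟨f a, ⟨a, rfl⟩⟩ := rfl
  simp only [Function.comp_apply, Equiv.trans_apply, h1, Equiv.sigmaCongrRight_apply,
    Equiv.sigmaFiberEquiv]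
  exact ((Fintype.equivOfCardEq (h (f a))) ⟨a, rfl⟩).2

private lemma coeff_trinomial_pow (N : ℕ) (x y z : ℂ) :
    ∀ m k : ℕ, (¬ ∃ b c : ℕ, b + c ≤ m ∧ k = 2*b + (2*N+2)*c) →
      ((C x + C y * X^2 + C z * X^(2*N+2))^m).coeff k = 0 := by
  intro m
  induction m with
  | zero =>
    intro k hk
    rw [pow_zero, coeff_one]
    have : k ≠ 0 := fun h => hk ⟨0, 0, by omega, by omega⟩
    simp [this]
  | succ m ih =>
    intro k hk
    rw [pow_succ, coeff_mul]
    refine Finset.sum_eq_zero fun p hp => ?_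
    have hpk : p.1 + p.2 = k := Finset.HasAntidiagonal.mem_antidiagonal.mp hp
    by_cases h1 : ∃ b c : ℕ, b + c ≤ m ∧ p.1 = 2*b + (2*N+2)*c
    · rcases h1 with ⟨b, c, hbc, hp1⟩
      have h2 : ((C x + C y * X^2 + C z * X^(2*N+2))).coeff p.2 = 0 := by
        have hj0 : p.2 ≠ 0 := by
          rintro h; exact hk ⟨b, c, by omega, by rw [← hpk, hp1, h]; ring⟩
        have hj2 : p.2 ≠ 2 := by
          rintro h; exact hk ⟨b+1, c, by omega, by rw [← hpk, hp1, h]; ring⟩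
        have hj3 : p.2 ≠ 2*N+2 := by
          rintro h; exact hk ⟨b, c+1, by omega, by rw [← hpk, hp1, h]; ring⟩
        simp [coeff_C, coeff_X_pow, hj0, hj2, hj3]
      rw [h2, mul_zero]
    · rw [ih p.1 h1, zero_mul]

private lemma not_good (n : ℕ) (hn : 2 ≤ n) :
    ¬ ∃ b c : ℕ, b + c ≤ n ∧ (n-2) + (2*n+1)*n = 2*b + (2*n+2)*c := by
  rintro ⟨b, c, h1, h2⟩
  obtain ⟨k, rfl⟩ : ∃ k, n = k + 2 := ⟨n - 2, by omega⟩
  simp only [Nat.add_sub_cancel] at h2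
  have hc : c ≤ k ∨ c = k + 1 ∨ c = k + 2 := by omega
  rcases hc with hc | rfl | rfl
  · nlinarith [h2, h1]
  · nlinarith [h2, h1]
  · nlinarith [h2, h1]

private lemma count_eq (n c1 c2 : ℕ) (hn : 2 ≤ n) (hle : c1 + c2 ≤ 2*n)
    (h : c1 + (2*n+1)*c2 = (n-2) + (2*n+1)*n) : c1 = n - 2 ∧ c2 = n := by
  obtain ⟨k, rfl⟩ : ∃ k, n = k + 2 := ⟨n - 2, by omega⟩
  simp only [Nat.add_sub_cancel] at h ⊢
  have hc : c2 ≤ k + 1 ∨ c2 = k + 2 ∨ c2 ≥ k + 3 := by omega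
  rcases hc with hc | rfl | hc
  · exfalso; nlinarith [h, hle]
  · exact ⟨Nat.add_right_cancel h, rfl⟩
  · exfalso; nlinarith [h, hle]

/-- Abstract Fujiki-relation argument: the mixed intersection number
`μ(w, w, A^(n-2), H^n)` vanishes. -/
theorem mixed_intersection_vanishes {M : Type*} [AddCommGroup M] [Module ℂ M]
    (n : ℕ) (hn : 2 ≤ n)
    (μ : MultilinearMap ℂ (fun _ : Fin (2 * n) => M) ℂ)
    (hsymm : ∀ (v : Fin (2 * n) → M) (σ : Equiv.Perm (Fin (2 * n))),
      μ (v ∘ σ) = μ v)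
    (q : QuadraticForm ℂ M) (B : M →ₗ[ℂ] M →ₗ[ℂ] ℂ)
    (hBsymm : ∀ x y, B x y = B y x)
    (hB : ∀ x y, q (x + y) = q x + q y + 2 * B x y)
    (a0 : ℂ) (ha0 : a0 ≠ 0)
    (hFujiki : ∀ D : M, μ (fun _ => D) = a0 * q D ^ n)
    (w A H : M) (hwA : B w A = 0) (hwH : B w H = 0) (hH : q H = 0) :
    μ (fun p : Fin (2 * n) =>
        if (p : ℕ) < 2 then w
        else if (p : ℕ) < 2 + (n - 2) then A
        else H) = 0 := by
  classical
  -- rewrite the goal in terms of vv / rr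
  have hgoal : (fun p : Fin (2 * n) =>
      if (p : ℕ) < 2 then w else if (p : ℕ) < 2 + (n - 2) then A else H)
      = (vv w A H) ∘ (rr n) := by
    funext p
    by_cases h1 : (p:ℕ) < 2 <;> by_cases h2 : (p:ℕ) < 2 + (n-2) <;>
      simp [vv, rr, h1, h2]
  rw [hgoal]
  set e₀ : ℕ := (n-2) + (2*n+1)*n with he₀
  -- any r with weight e₀ has the same μ-value as rr n
  have hfib : ∀ r : Fin (2*n) → Fin 3, (∑ i, ee n (r i)) = e₀ →
      (univ.filter fun i => r i = 0).card = 2 ∧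
      (univ.filter fun i => r i = 1).card = n - 2 ∧
      (univ.filter fun i => r i = 2).card = n := by
    intro r hr
    rw [sum_ee] at hr
    have htot := total_count n r
    have h12 := count_eq n _ _ hn (by omega) hr
    exact ⟨by omega, h12⟩
  have hrr_sum : (∑ i, ee n (rr n i)) = e₀ := by
    rw [sum_ee, rr_count1 n hn, rr_count2 n hn]
  have hμr : ∀ r : Fin (2*n) → Fin 3, (∑ i, ee n (r i)) = e₀ →
      μ ((vv w A H) ∘ r) = μ ((vv w A H) ∘ (rr n)) := by
    intro r hr
    obtain ⟨c0, c1, c2⟩ := hfib r hr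
    obtain ⟨d0, d1, d2⟩ := hfib (rr n) hrr_sum
    obtain ⟨σ, hσ⟩ := exists_comp_perm r (rr n) (by
      intro b
      rw [Fintype.card_subtype, Fintype.card_subtype]
      fin_cases b
      · exact c0.trans d0.symm
      · exact c1.trans d1.symm
      · exact c2.trans d2.symm)
    calc μ ((vv w A H) ∘ r) = μ (((vv w A H) ∘ (rr n)) ∘ σ) := by
          rw [Function.comp_assoc, hσ]
      _ = μ ((vv w A H) ∘ (rr n)) := hsymm _ σ
  -- the polynomial identity
  have hq : ∀ s : ℂ, q (w + s • A + s^(2*n+1) • H)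
      = q w + q A * s^2 + 2 * B A H * s^(2*n+2) := by
    intro s
    rw [add_assoc, hB, hB, QuadraticMap.map_smul, QuadraticMap.map_smul]
    simp only [map_smul, LinearMap.smul_apply, smul_eq_mul, map_add,
      LinearMap.add_apply, hwA, hwH, hH]
    ring
  have hPQ : (∑ r : Fin (2*n) → Fin 3, C (μ ((vv w A H) ∘ r)) * X ^ (∑ i, ee n (r i)))
      = C a0 * (C (q w) + C (q A) * X^2 + C (2 * B A H) * X^(2*n+2)) ^ n := by
    apply Polynomial.funext
    intro s
    have hL : (∑ r : Fin (2*n) → Fin 3,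
        C (μ ((vv w A H) ∘ r)) * X ^ (∑ i, ee n (r i))).eval s
        = μ (fun _ : Fin (2*n) => w + s • A + s^(2*n+1) • H) := by
      have h1 : (fun _ : Fin (2*n) => w + s • A + s^(2*n+1) • H)
          = fun _ => ∑ j : Fin 3, s ^ (ee n j) • (vv w A H) j := by
        funext i
        simp [Fin.sum_univ_three, vv, ee]
      rw [h1, MultilinearMap.map_sum, Polynomial.eval_finset_sum]
      refine Finset.sum_congr rfl fun r _ => ?_
      rw [Polynomial.eval_mul, Polynomial.eval_C, Polynomial.eval_pow, Polynomial.eval_X,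
        μ.map_smul_univ, Finset.prod_pow_eq_pow_sum, smul_eq_mul, mul_comm]
      rfl
    rw [hL, hFujiki, Polynomial.eval_mul, Polynomial.eval_C, Polynomial.eval_pow]
    simp only [Polynomial.eval_add, Polynomial.eval_mul, Polynomial.eval_C,
      Polynomial.eval_pow, Polynomial.eval_X]
    rw [hq s]
  -- coefficient extraction at e₀
  have hz : (∑ r : Fin (2*n) → Fin 3,
      C (μ ((vv w A H) ∘ r)) * X ^ (∑ i, ee n (r i))).coeff e₀ = 0 := by
    rw [hPQ, Polynomial.coeff_C_mul,
      coeff_trinomial_pow n (q w) (q A) (2 * B A H) n e₀ (he₀ ▸ not_good n hn), mul_zero]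
  rw [Polynomial.finset_sum_coeff] at hz
  have hPc : ∀ r : Fin (2*n) → Fin 3,
      (C (μ ((vv w A H) ∘ r)) * X ^ (∑ i, ee n (r i))).coeff e₀
      = if (∑ i, ee n (r i)) = e₀ then μ ((vv w A H) ∘ (rr n)) else 0 := by
    intro r
    rw [Polynomial.coeff_C_mul, Polynomial.coeff_X_pow]
    by_cases h : (∑ i, ee n (r i)) = e₀
    · rw [if_pos h, if_pos h.symm, mul_one, hμr r h]
    · rw [if_neg h, if_neg (fun hh => h hh.symm), mul_zero]
  rw [Finset.sum_congr rfl (fun r _ => hPc r), ← Finset.sum_filter,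
    Finset.sum_const, nsmul_eq_mul] at hz
  have hmem : rr n ∈ univ.filter (fun r : Fin (2*n) → Fin 3 => (∑ i, ee n (r i)) = e₀) :=
    Finset.mem_filter.mpr ⟨Finset.mem_univ _, hrr_sum⟩
  have hcard : ((univ.filter fun r : Fin (2*n) → Fin 3 =>
      (∑ i, ee n (r i)) = e₀).card : ℂ) ≠ 0 := by
    have hne : (univ.filter fun r : Fin (2*n) → Fin 3 =>
        (∑ i, ee n (r i)) = e₀).Nonempty := ⟨rr n, hmem⟩
    have hpos := Finset.card_pos.mpr hne
    exact Nat.cast_ne_zero.mpr hpos.ne'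
  exact (mul_eq_zero.mp hz).resolve_left hcard
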